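/- For integers 0 ≤ θ_1 < θ_2 and λ > 0, G_P'(λ) > 0 if and only if λ < (θ_2!/θ_1!)^{1/(θ_2-θ_1)}, where G_P(λ) = ∑_{i=θ_1+1}^{θ_2} e^{-λ} λ^i / i!. -/

import Mathlib

open Finset

private lemma tele (f : ℕ → ℝ) (a b : ℕ) (h : a ≤ b) :
    ∑ i ∈ Finset.Icc (a + 1) b, (f (i - 1) - f i) = f a - f b := by
  have : Finset.Icc (a + 1) b = Finset.Ico (a + 1) (b + 1) := by
    rw [Finset.Ico_add_one_right_eq_Icc]
  rw [this, Finset.sum_Ico_eq_sum_range]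
  have h2 : b + 1 - (a + 1) = b - a := by omega
  rw [h2]
  have : ∀ i, f (a + 1 + i - 1) - f (a + 1 + i) = f (a + i) - f (a + (i + 1)) := by
    intro i
    congr 2 <;> omega
  simp_rw [this]
  rw [Finset.sum_range_sub' (fun i => f (a + i))]
  congr 2
  omega

theorem stmt3 (θ1 θ2 : ℕ) (h : θ1 < θ2) (lam : ℝ) (hlam : 0 < lam) :
    0 < deriv
        (fun x : ℝ => ∑ i ∈ Finset.Icc (θ1 + 1) θ2, Real.exp (-x) * x ^ i / (Nat.factorial i))
        lam ↔
      lam < ((Nat.factorial θ2 : ℝ) / (Nat.factorial θ1)) ^ (((θ2 : ℝ) - θ1)⁻¹) := by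
  set f : ℕ → ℝ := fun j => Real.exp (-lam) * lam ^ j / (Nat.factorial j) with hf
  have hderiv : HasDerivAt
      (fun x : ℝ => ∑ i ∈ Finset.Icc (θ1 + 1) θ2, Real.exp (-x) * x ^ i / (Nat.factorial i))
      (f θ1 - f θ2) lam := by
    have := tele f θ1 θ2 h.le
    rw [← this]
    apply HasDerivAt.fun_sum
    intro i hi
    simp only [Finset.mem_Icc] at hi
    obtain ⟨k, rfl⟩ : ∃ k, i = k + 1 := ⟨i - 1, by omega⟩
    have h1 : HasDerivAt (fun x : ℝ => Real.exp (-x)) (-Real.exp (-lam)) lam := by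
      simpa [Function.comp_def] using (Real.hasDerivAt_exp (-lam)).comp lam (hasDerivAt_neg lam)
    have h2 : HasDerivAt (fun x : ℝ => x ^ (k + 1)) ((k + 1 : ℕ) * lam ^ k) lam := by
      simpa using hasDerivAt_pow (k + 1) lam
    have := (h1.fun_mul h2).div_const (Nat.factorial (k + 1) : ℝ)
    convert this using 1
    · rfl
    simp only [hf, Nat.add_sub_cancel, Nat.factorial_succ]
    have hk : (Nat.factorial k : ℝ) ≠ 0 := Nat.cast_ne_zero.mpr (Nat.factorial_ne_zero k)
    have hk1 : ((k : ℝ) + 1) ≠ 0 := by positivity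
    push_cast
    field_simp
    ring
  rw [hderiv.deriv]
  have hfac1 : (0 : ℝ) < (Nat.factorial θ1 : ℝ) := by positivity
  have hfac2 : (0 : ℝ) < (Nat.factorial θ2 : ℝ) := by positivity
  have hstep1 : 0 < f θ1 - f θ2 ↔ lam ^ (θ2 - θ1) < (Nat.factorial θ2 : ℝ) / (Nat.factorial θ1) := by
    rw [sub_pos, hf]
    simp only
    rw [div_lt_div_iff₀ hfac2 hfac1, lt_div_iff₀ hfac1]
    constructor
    · intro h1
      have h2 : Real.exp (-lam) * (lam ^ θ1 * lam ^ (θ2 - θ1)) * (Nat.factorial θ1) <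
          Real.exp (-lam) * lam ^ θ1 * (Nat.factorial θ2) := by
        rw [← pow_add]
        have : θ1 + (θ2 - θ1) = θ2 := by omega
        rw [this]
        linarith
      have hpos : 0 < Real.exp (-lam) * lam ^ θ1 := by positivity
      nlinarith [pow_pos hlam θ1, Real.exp_pos (-lam)]
    · intro h1
      have hpos : 0 < Real.exp (-lam) * lam ^ θ1 := by positivity
      have : Real.exp (-lam) * lam ^ θ2 * (Nat.factorial θ1) =
          (Real.exp (-lam) * lam ^ θ1) * (lam ^ (θ2 - θ1) * (Nat.factorial θ1)) := by
        have hp : lam ^ θ2 = lam ^ θ1 * lam ^ (θ2 - θ1) := by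
          rw [← pow_add]; congr 1; omega
        rw [hp]; ring
      rw [this]
      calc (Real.exp (-lam) * lam ^ θ1) * (lam ^ (θ2 - θ1) * (Nat.factorial θ1))
          < (Real.exp (-lam) * lam ^ θ1) * (Nat.factorial θ2) := by
            apply mul_lt_mul_of_pos_left _ hpos
            exact h1
        _ = Real.exp (-lam) * lam ^ θ1 * (Nat.factorial θ2) := rfl
  rw [hstep1]
  have hd : ((θ2 : ℝ) - θ1) = ((θ2 - θ1 : ℕ) : ℝ) := by push_cast [Nat.cast_sub h.le]; ring
  rw [hd, Real.lt_rpow_inv_iff_of_pos hlam.le (by positivity)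
    (by exact_mod_cast Nat.sub_pos_of_lt h), Real.rpow_natCast]
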